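/- Let c_{−1} and c_0 be i.i.d. strictly positive random variables with lim_{M→∞} log ℙ(c_0 > M)/log M = −α_∞ and lim_{ε→0+} log ℙ(c_0 < ε)/log ε = α_0, where α_∞, α_0 ∈ (0,∞] and ᾱ := min(α_0, α_∞) < ∞. Then for any δ > 0 the ratio ρ_0 := e^{−2δ} c_{−1}/c_0 satisfies lim_{t→∞} log ℙ(ρ_0 > t)/log t = −ᾱ. -/

import Mathlib

open MeasureTheory Filter ProbabilityTheory

set_option maxHeartbeats 2000000 in
/-- **Tail of `ρ₀` for the BiRC model.**
Let `c₋₁, c₀` be i.i.d. strictly positive random variables whose tail at `+∞` has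
exponent `α∞` and whose tail at `0` has exponent `α₀` (values in `(0,∞]`), with
`ᾱ := min(α₀, α∞) < ∞`. Then for any `δ > 0` the ratio `ρ₀ := e^{-2δ} c₋₁ / c₀`
satisfies `lim_{t→∞} log P(ρ₀ > t) / log t = -ᾱ`. -/
theorem tail_of_rho_BiRC
    {Ω : Type*} [MeasurableSpace Ω] (P : Measure Ω) [IsProbabilityMeasure P]
    (cNeg cZero : Ω → ℝ) (hmeas₁ : Measurable cNeg) (hmeas₂ : Measurable cZero)
    (hpos₁ : ∀ ω, 0 < cNeg ω) (hpos₂ : ∀ ω, 0 < cZero ω)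
    (hindep : IndepFun cNeg cZero P)
    (hident : IdentDistrib cNeg cZero P P)
    (αinf α0 : EReal) (hαinf : 0 < αinf) (hα0 : 0 < α0)
    (hbar : min α0 αinf < ⊤)
    (htail_inf : Tendsto
      (fun M : ℝ => ((Real.log (P {ω | cZero ω > M}).toReal / Real.log M : ℝ) : EReal))
      atTop (nhds (-αinf)))
    (htail_0 : Tendsto
      (fun ε : ℝ => ((Real.log (P {ω | cZero ω < ε}).toReal / Real.log ε : ℝ) : EReal))
      (nhdsWithin 0 (Set.Ioi 0)) (nhds α0))
    (δ : ℝ) (hδ : 0 < δ) :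
    Tendsto
      (fun t : ℝ =>
        Real.log (P {ω | Real.exp (-2 * δ) * cNeg ω / cZero ω > t}).toReal / Real.log t)
      atTop (nhds (-(min α0 αinf).toReal)) := by
  classical
  have hα_pos : (0 : EReal) < min α0 αinf := lt_min hα0 hαinf
  have hα_ne_top : min α0 αinf ≠ ⊤ := hbar.ne
  have hα_ne_bot : min α0 αinf ≠ ⊥ := fun h => by simp [h] at hα_pos
  set A : ℝ := (min α0 αinf).toReal with hA_def
  have hAcoe : ((A : ℝ) : EReal) = min α0 αinf := EReal.coe_toReal hα_ne_top hα_ne_bot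
  have hA_pos : 0 < A := by
    have h := hα_pos
    rw [← hAcoe] at h
    exact_mod_cast h
  have prob_le_one : ∀ s : Set Ω, (P s).toReal ≤ 1 := by
    intro s
    have h1 : P s ≤ 1 := prob_le_one
    have h2 : (P s).toReal ≤ (1 : ENNReal).toReal :=
      ENNReal.toReal_mono ENNReal.one_ne_top h1
    simpa using h2
  -- positivity of the tails
  have Fpos : ∀ M : ℝ, 0 < P {ω | cZero ω > M} := by
    intro M
    by_contra h
    push_neg at h
    have h0 : P {ω | cZero ω > M} = 0 := le_antisymm h zero_le
    have hev : ∀ᶠ M' : ℝ in atTop,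
        ((Real.log (P {ω | cZero ω > M'}).toReal / Real.log M' : ℝ) : EReal) = (0 : EReal) := by
      filter_upwards [eventually_ge_atTop M] with M' hM'
      have hsub : {ω | cZero ω > M'} ⊆ {ω | cZero ω > M} :=
        fun ω hω => lt_of_le_of_lt hM' hω
      have : P {ω | cZero ω > M'} = 0 :=
        le_antisymm (le_trans (measure_mono hsub) h0.le) zero_le
      simp [this]
    have huniq : (-αinf : EReal) = 0 :=
      tendsto_nhds_unique htail_inf
        (Tendsto.congr' (by filter_upwards [hev] with x hx using hx.symm) tendsto_const_nhds)
    rw [EReal.neg_eq_zero_iff] at huniq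
    exact hαinf.ne' huniq
  have Gpos : ∀ ε : ℝ, 0 < ε → 0 < P {ω | cZero ω < ε} := by
    intro ε₀ hε₀
    by_contra h
    push_neg at h
    have h0 : P {ω | cZero ω < ε₀} = 0 := le_antisymm h zero_le
    have hev : ∀ᶠ ε in nhdsWithin (0:ℝ) (Set.Ioi 0),
        ((Real.log (P {ω | cZero ω < ε}).toReal / Real.log ε : ℝ) : EReal) = (0 : EReal) := by
      filter_upwards [Ioo_mem_nhdsGT_of_mem (Set.mem_Ico.mpr ⟨le_rfl, hε₀⟩)] with ε hε
      have hsub : {ω | cZero ω < ε} ⊆ {ω | cZero ω < ε₀} :=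
        fun ω hω => lt_trans hω hε.2
      have : P {ω | cZero ω < ε} = 0 :=
        le_antisymm (le_trans (measure_mono hsub) h0.le) zero_le
      simp [this]
    have huniq : α0 = (0 : EReal) :=
      tendsto_nhds_unique htail_0
        (Tendsto.congr' (by filter_upwards [hev] with x hx using hx.symm) tendsto_const_nhds)
    exact hα0.ne' huniq
  have FtoReal_pos : ∀ M : ℝ, 0 < (P {ω | cZero ω > M}).toReal :=
    fun M => ENNReal.toReal_pos (Fpos M).ne' (measure_ne_top P _)
  have GtoReal_pos : ∀ ε : ℝ, 0 < ε → 0 < (P {ω | cZero ω < ε}).toReal :=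
    fun ε hε => ENNReal.toReal_pos (Gpos ε hε).ne' (measure_ne_top P _)
  -- identically distributed tails
  have hFneg : ∀ a : ℝ, P {ω | cNeg ω > a} = P {ω | cZero ω > a} :=
    fun a => hident.measure_mem_eq (measurableSet_Ioi (a := a))
  -- independence
  have hInd : ∀ a b : ℝ, P ({ω | cZero ω < a} ∩ {ω | cNeg ω > b})
      = P {ω | cZero ω < a} * P {ω | cNeg ω > b} := by
    intro a b
    have h := hindep.measure_inter_preimage_eq_mul (Set.Ioi b) (Set.Iio a)
      measurableSet_Ioi measurableSet_Iio
    have h2 : P ({ω | cNeg ω > b} ∩ {ω | cZero ω < a})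
        = P {ω | cNeg ω > b} * P {ω | cZero ω < a} := h
    rw [Set.inter_comm] at h2
    rw [h2, mul_comm]
  -- tail estimates from the hypotheses
  have Fupper : ∀ β : ℝ, (β : EReal) < αinf →
      ∀ᶠ M : ℝ in atTop, (P {ω | cZero ω > M}).toReal ≤ M ^ (-β) := by
    intro β hβ
    have hlt : (-αinf : EReal) < ((-β : ℝ) : EReal) := by
      rw [EReal.coe_neg]
      exact EReal.neg_lt_neg_iff.mpr hβ
    have h1 := htail_inf.eventually_lt_const hlt
    filter_upwards [h1, eventually_gt_atTop 1] with M hM hM1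
    have hlogM : 0 < Real.log M := Real.log_pos hM1
    have h2 : Real.log (P {ω | cZero ω > M}).toReal / Real.log M < -β := by
      exact_mod_cast hM
    have h3 : Real.log (P {ω | cZero ω > M}).toReal < -β * Real.log M :=
      (div_lt_iff₀ hlogM).mp h2
    have h4 : (P {ω | cZero ω > M}).toReal
        = Real.exp (Real.log (P {ω | cZero ω > M}).toReal) :=
      (Real.exp_log (FtoReal_pos M)).symm
    rw [h4, Real.rpow_def_of_pos (lt_trans one_pos hM1)]
    exact (Real.exp_le_exp.mpr (by nlinarith)).trans le_rfl
  have Flower : ∀ b : ℝ, αinf < (b : EReal) →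
      ∀ᶠ M : ℝ in atTop, M ^ (-b) ≤ (P {ω | cZero ω > M}).toReal := by
    intro b hb
    have hlt : ((-b : ℝ) : EReal) < (-αinf : EReal) := by
      rw [EReal.coe_neg]
      exact EReal.neg_lt_neg_iff.mpr hb
    have h1 := htail_inf.eventually_const_lt hlt
    filter_upwards [h1, eventually_gt_atTop 1] with M hM hM1
    have hlogM : 0 < Real.log M := Real.log_pos hM1
    have h2 : -b < Real.log (P {ω | cZero ω > M}).toReal / Real.log M := by
      exact_mod_cast hM
    have h3 : -b * Real.log M < Real.log (P {ω | cZero ω > M}).toReal :=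
      (lt_div_iff₀ hlogM).mp h2
    have h4 : (P {ω | cZero ω > M}).toReal
        = Real.exp (Real.log (P {ω | cZero ω > M}).toReal) :=
      (Real.exp_log (FtoReal_pos M)).symm
    rw [h4, Real.rpow_def_of_pos (lt_trans one_pos hM1)]
    exact (Real.exp_le_exp.mpr (by nlinarith)).trans le_rfl
  have Gupper : ∀ β : ℝ, (β : EReal) < α0 →
      ∀ᶠ ε in nhdsWithin (0:ℝ) (Set.Ioi 0), (P {ω | cZero ω < ε}).toReal ≤ ε ^ β := by
    intro β hβ
    have h1 := htail_0.eventually_const_lt (show ((β:ℝ):EReal) < α0 from hβ)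
    filter_upwards [h1, Ioo_mem_nhdsGT_of_mem (Set.mem_Ico.mpr ⟨le_rfl, one_pos⟩)] with ε hε hε01
    have hlogε : Real.log ε < 0 := Real.log_neg hε01.1 hε01.2
    have h2 : β < Real.log (P {ω | cZero ω < ε}).toReal / Real.log ε := by
      exact_mod_cast hε
    have h3 : Real.log (P {ω | cZero ω < ε}).toReal < β * Real.log ε :=
      (lt_div_iff_of_neg hlogε).mp h2
    have h4 : (P {ω | cZero ω < ε}).toReal
        = Real.exp (Real.log (P {ω | cZero ω < ε}).toReal) :=
      (Real.exp_log (GtoReal_pos ε hε01.1)).symm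
    rw [h4, Real.rpow_def_of_pos hε01.1]
    exact (Real.exp_le_exp.mpr (by nlinarith)).trans le_rfl
  have Glower : ∀ b : ℝ, α0 < (b : EReal) →
      ∀ᶠ ε in nhdsWithin (0:ℝ) (Set.Ioi 0), ε ^ b ≤ (P {ω | cZero ω < ε}).toReal := by
    intro b hb
    have h1 := htail_0.eventually_lt_const (show α0 < ((b:ℝ):EReal) from hb)
    filter_upwards [h1, Ioo_mem_nhdsGT_of_mem (Set.mem_Ico.mpr ⟨le_rfl, one_pos⟩)] with ε hε hε01
    have hlogε : Real.log ε < 0 := Real.log_neg hε01.1 hε01.2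
    have h2 : Real.log (P {ω | cZero ω < ε}).toReal / Real.log ε < b := by
      exact_mod_cast hε
    have h3 : b * Real.log ε < Real.log (P {ω | cZero ω < ε}).toReal :=
      (div_lt_iff_of_neg hlogε).mp h2
    have h4 : (P {ω | cZero ω < ε}).toReal
        = Real.exp (Real.log (P {ω | cZero ω < ε}).toReal) :=
      (Real.exp_log (GtoReal_pos ε hε01.1)).symm
    rw [h4, Real.rpow_def_of_pos hε01.1]
    exact (Real.exp_le_exp.mpr (by nlinarith)).trans le_rfl
  -- ### Upper bound
  have hUpper : ∀ γ : ℝ, 0 < γ → (γ : EReal) < min α0 αinf → ∃ C : ℝ, 0 < C ∧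
      ∀ᶠ t : ℝ in atTop,
        (P {ω | Real.exp (-2 * δ) * cNeg ω / cZero ω > t}).toReal ≤ C * t ^ (-γ) := by
    intro γ hγ0 hγα
    obtain ⟨β', hβ'1, hβ'2⟩ := exists_between hγα
    have hβ'top : β' ≠ ⊤ := (hβ'2.trans hbar).ne
    have hβ'bot : β' ≠ ⊥ := (lt_of_le_of_lt bot_le hβ'1).ne'
    set β : ℝ := β'.toReal with hβ_def
    have hβcoe : ((β : ℝ) : EReal) = β' := EReal.coe_toReal hβ'top hβ'bot
    have hγβ : γ < β := by
      rw [← hβcoe] at hβ'1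
      exact_mod_cast hβ'1
    have hβ0 : 0 < β := hγ0.trans hγβ
    have hβinf : ((β : ℝ) : EReal) < αinf := by
      rw [hβcoe]; exact hβ'2.trans_le (min_le_right _ _)
    have hβα0 : ((β : ℝ) : EReal) < α0 := by
      rw [hβcoe]; exact hβ'2.trans_le (min_le_left _ _)
    -- choose n
    set n : ℕ := max 1 ⌈β / (β - γ)⌉₊ with hn_def
    have hn1 : 1 ≤ n := le_max_left _ _
    have hnpos : (0 : ℝ) < n := by
      have : (1:ℝ) ≤ (n:ℝ) := by exact_mod_cast hn1
      linarith
    have hnβγ : β / n ≤ β - γ := by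
      have h1 : β / (β - γ) ≤ (n : ℝ) := by
        refine le_trans (Nat.le_ceil _) ?_
        exact_mod_cast le_max_right 1 ⌈β / (β - γ)⌉₊
      have h2 : β ≤ (n : ℝ) * (β - γ) := (div_le_iff₀ (by linarith)).mp h1
      rw [div_le_iff₀ hnpos]
      linarith [mul_comm (n:ℝ) (β - γ)]
    obtain ⟨M₁, hM₁⟩ := eventually_atTop.mp (Fupper β hβinf)
    obtain ⟨r, hr0, hr⟩ := Metric.mem_nhdsWithin_iff.mp (Gupper β hβα0)
    have hG : ∀ ε : ℝ, 0 < ε → ε < r → (P {ω | cZero ω < ε}).toReal ≤ ε ^ β := by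
      intro ε h1 h2
      exact hr ⟨by rw [Metric.mem_ball, Real.dist_eq, sub_zero, abs_of_pos h1]; exact h2, h1⟩
    refine ⟨(n : ℝ) + 2, by positivity, ?_⟩
    have hev1 : ∀ᶠ t : ℝ in atTop, M₁ ≤ t ^ ((1:ℝ)/n) :=
      (tendsto_rpow_atTop (by positivity)).eventually_ge_atTop M₁
    have hev2 : ∀ᶠ t : ℝ in atTop, t ^ (-((1:ℝ)/n)) < r :=
      (tendsto_rpow_neg_atTop (by positivity)).eventually_lt_const hr0
    filter_upwards [hev1, hev2, eventually_gt_atTop 1, eventually_ge_atTop M₁]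
      with t ht1 ht2 ht3 ht4
    have ht0 : (0:ℝ) < t := lt_trans one_pos ht3
    set u : ℕ → ℝ := fun k => t ^ (-((k:ℝ)/n)) with hu_def
    have hu_pos : ∀ k, 0 < u k := fun k => Real.rpow_pos_of_pos ht0 _
    have hu0 : u 0 = 1 := by simp [hu_def]
    have hu_le : ∀ k : ℕ, 1 ≤ k → u k ≤ t ^ (-((1:ℝ)/n)) := by
      intro k hk
      apply (Real.rpow_le_rpow_left_iff ht3).mpr
      have : (1:ℝ) ≤ (k:ℝ) := by exact_mod_cast hk
      rw [neg_le_neg_iff, div_le_div_iff₀ hnpos hnpos]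
      nlinarith
    -- set inclusion
    have hsub : {ω | Real.exp (-2 * δ) * cNeg ω / cZero ω > t} ⊆
        ({ω | cNeg ω > t} ∪ {ω | cZero ω < u n}) ∪
        ⋃ k ∈ Finset.range n, ({ω | cZero ω < u k} ∩ {ω | cNeg ω > t * u (k+1)}) := by
      intro ω hω
      have hc0 := hpos₂ ω
      have hcn := hpos₁ ω
      have hE : t * cZero ω < cNeg ω := by
        have hexp0 : 0 < Real.exp (-2 * δ) := Real.exp_pos _
        have hexp : Real.exp (-2 * δ) ≤ 1 := by
          rw [Real.exp_le_one_iff]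
          nlinarith
        have h1 : t < Real.exp (-2 * δ) * cNeg ω / cZero ω := hω
        have h2 : Real.exp (-2 * δ) * cNeg ω / cZero ω ≤ cNeg ω / cZero ω := by
          gcongr
          nlinarith
        have h3 : t < cNeg ω / cZero ω := lt_of_lt_of_le h1 h2
        exact (lt_div_iff₀ hc0).mp h3
      by_cases hA : cZero ω < u n
      · exact Or.inl (Or.inr hA)
      push_neg at hA
      by_cases hB : (1:ℝ) ≤ cZero ω
      · refine Or.inl (Or.inl ?_)
        show t < cNeg ω
        nlinarith
      push_neg at hB
      right
      set k : ℕ := Nat.findGreatest (fun k => cZero ω < u k) n with hk_def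
      have hk_prop : cZero ω < u k :=
        Nat.findGreatest_spec (P := fun k => cZero ω < u k) (m := 0) (Nat.zero_le n) (by show cZero ω < u 0; rw [hu0]; exact hB)
      have hk_le : k ≤ n := Nat.findGreatest_le n
      have hk_lt : k < n := by
        rcases lt_or_eq_of_le hk_le with h | h
        · exact h
        · rw [h] at hk_prop; exact absurd hk_prop (not_lt.mpr hA)
      have hk1 : u (k+1) ≤ cZero ω := by
        by_contra hcon
        push_neg at hcon
        exact Nat.findGreatest_is_greatest (Nat.lt_succ_self k) hk_lt hcon
      refine Set.mem_biUnion (Finset.mem_range.mpr hk_lt) ⟨hk_prop, ?_⟩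
      show t * u (k+1) < cNeg ω
      calc t * u (k+1) ≤ t * cZero ω := by nlinarith [hu_pos (k+1)]
        _ < cNeg ω := hE
    -- individual bounds
    have hrpow_le : ∀ a b : ℝ, a ≤ b → t ^ a ≤ t ^ b :=
      fun a b hab => (Real.rpow_le_rpow_left_iff ht3).mpr hab
    have hFbound : ∀ v : ℝ, M₁ ≤ v → (P {ω | cNeg ω > v}).toReal ≤ v ^ (-β) := by
      intro v hv; rw [hFneg]; exact hM₁ v hv
    have hF_t : (P {ω | cNeg ω > t}).toReal ≤ t ^ (-γ) :=
      (hFbound t ht4).trans (hrpow_le _ _ (by linarith))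
    have hGk : ∀ k : ℕ, k ≤ n →
        (P {ω | cZero ω < u k}).toReal ≤ t ^ (-((k:ℝ)/n) * β) := by
      intro k hk
      rcases Nat.eq_zero_or_pos k with h0 | h0
      · subst h0
        have : t ^ (-((0:ℕ):ℝ)/n * β) = 1 := by norm_num
        rw [show (-(((0:ℕ):ℝ)/n) * β) = 0 by norm_num, Real.rpow_zero]
        exact prob_le_one _
      · have h1 : u k < r := lt_of_le_of_lt (hu_le k h0) ht2
        have h2 := hG (u k) (hu_pos k) h1
        have h3 : (u k) ^ β = t ^ (-((k:ℝ)/n) * β) := by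
          rw [hu_def, Real.rpow_mul ht0.le]
        exact h2.trans h3.le
    have hFk : ∀ k : ℕ, k < n →
        (P {ω | cNeg ω > t * u (k+1)}).toReal ≤ t ^ (-(((n:ℝ)-(k+1))/n) * β) := by
      intro k hk
      have htu : t * u (k+1) = t ^ (((n:ℝ)-(k+1))/n) := by
        rw [hu_def]
        have : t * t ^ (-(((k+1:ℕ):ℝ)/n)) = t ^ (1 + -(((k+1:ℕ):ℝ)/n)) := by
          rw [Real.rpow_add ht0, Real.rpow_one]
        rw [this]
        congr 1
        push_cast
        rw [sub_div, div_self hnpos.ne']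
        ring
      rcases eq_or_lt_of_le (Nat.succ_le_of_lt hk) with h1 | h1
      · -- k + 1 = n
        have hcast : ((n:ℝ)-(k+1)) = 0 := by
          have : ((k:ℝ)+1) = (n:ℝ) := by exact_mod_cast congrArg (Nat.cast (R := ℝ)) h1
          linarith
        rw [hcast]
        simp only [zero_div, neg_zero, zero_mul, Real.rpow_zero]
        exact prob_le_one _
      · -- k + 1 < n
        have hke : (1:ℝ) ≤ ((n:ℝ)-(k+1)) := by
          have : ((k:ℝ)+1) + 1 ≤ (n:ℝ) := by exact_mod_cast Nat.succ_le_of_lt h1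
          linarith
        have hexp : (1:ℝ)/n ≤ (((n:ℝ)-(k+1))/n) := by
          rw [div_le_div_iff₀ hnpos hnpos]; nlinarith
        have hv : M₁ ≤ t ^ ((((n:ℝ)-(k+1)))/n) := le_trans ht1 (hrpow_le _ _ hexp)
        have h2 := hFbound _ hv
        have h3 : (t ^ ((((n:ℝ)-(k+1)))/n)) ^ (-β) = t ^ (-(((n:ℝ)-(k+1))/n) * β) := by
          rw [← Real.rpow_mul ht0.le]
          ring_nf
        rw [htu]
        exact h2.trans h3.le
    have hBk : ∀ k ∈ Finset.range n,
        (P ({ω | cZero ω < u k} ∩ {ω | cNeg ω > t * u (k+1)})).toReal ≤ t ^ (-γ) := by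
      intro k hk
      rw [Finset.mem_range] at hk
      rw [hInd, ENNReal.toReal_mul]
      have h1 := hGk k hk.le
      have h2 := hFk k hk
      have h3 : (P {ω | cZero ω < u k}).toReal * (P {ω | cNeg ω > t * u (k+1)}).toReal
          ≤ t ^ (-((k:ℝ)/n) * β) * t ^ (-(((n:ℝ)-(k+1))/n) * β) :=
        mul_le_mul h1 h2 ENNReal.toReal_nonneg (Real.rpow_nonneg ht0.le _)
      refine h3.trans ?_
      rw [← Real.rpow_add ht0]
      apply hrpow_le
      have hsum : -((k:ℝ)/n) * β + -(((n:ℝ)-(k+1))/n) * β = -(((n:ℝ)-1)/n) * β := by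
        ring
      rw [hsum]
      have hfrac : γ ≤ (((n:ℝ)-1)/n) * β := by
        have h4 : ((n:ℝ)-1)/n = 1 - 1/n := by rw [sub_div, div_self hnpos.ne']
        have h5 : (1 - 1/(n:ℝ)) * β = β - (1/(n:ℝ)) * β := by ring
        have h6 : (1/(n:ℝ)) * β = β/(n:ℝ) := by ring
        rw [h4, h5, h6]
        linarith
      nlinarith
    have hG_n : (P {ω | cZero ω < u n}).toReal ≤ t ^ (-γ) := by
      have := hGk n le_rfl
      refine this.trans (hrpow_le _ _ ?_)
      rw [div_self hnpos.ne']
      nlinarith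
    -- union bound
    have hle1 : P {ω | Real.exp (-2 * δ) * cNeg ω / cZero ω > t} ≤
        (P {ω | cNeg ω > t} + P {ω | cZero ω < u n})
          + ∑ k ∈ Finset.range n,
            P ({ω | cZero ω < u k} ∩ {ω | cNeg ω > t * u (k+1)}) := by
      refine (measure_mono hsub).trans ?_
      refine (measure_union_le _ _).trans ?_
      exact add_le_add (measure_union_le _ _) (measure_biUnion_finset_le _ _)
    have hfin1 : (P {ω | cNeg ω > t} + P {ω | cZero ω < u n}) ≠ ⊤ :=
      ENNReal.add_ne_top.mpr ⟨measure_ne_top P _, measure_ne_top P _⟩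
    have hfin2 : (∑ k ∈ Finset.range n,
        P ({ω | cZero ω < u k} ∩ {ω | cNeg ω > t * u (k+1)})) ≠ ⊤ := by
      refine ENNReal.sum_ne_top.mpr ?_
      intro k _
      exact measure_ne_top P _
    have hle2 : (P {ω | Real.exp (-2 * δ) * cNeg ω / cZero ω > t}).toReal ≤
        ((P {ω | cNeg ω > t}).toReal + (P {ω | cZero ω < u n}).toReal)
          + ∑ k ∈ Finset.range n,
            (P ({ω | cZero ω < u k} ∩ {ω | cNeg ω > t * u (k+1)})).toReal := by
      have h1 := ENNReal.toReal_mono (ENNReal.add_ne_top.mpr ⟨hfin1, hfin2⟩) hle1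
      rw [ENNReal.toReal_add hfin1 hfin2,
        ENNReal.toReal_add (measure_ne_top P _) (measure_ne_top P _),
        ENNReal.toReal_sum (fun k _ => measure_ne_top P _)] at h1
      exact h1
    have hsum_le : ∑ k ∈ Finset.range n,
        (P ({ω | cZero ω < u k} ∩ {ω | cNeg ω > t * u (k+1)})).toReal
          ≤ (n : ℝ) * t ^ (-γ) := by
      calc ∑ k ∈ Finset.range n,
          (P ({ω | cZero ω < u k} ∩ {ω | cNeg ω > t * u (k+1)})).toReal
          ≤ ∑ _k ∈ Finset.range n, t ^ (-γ) := Finset.sum_le_sum hBk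
        _ = (n : ℝ) * t ^ (-γ) := by
          rw [Finset.sum_const, Finset.card_range, nsmul_eq_mul]
    calc (P {ω | Real.exp (-2 * δ) * cNeg ω / cZero ω > t}).toReal
        ≤ ((P {ω | cNeg ω > t}).toReal + (P {ω | cZero ω < u n}).toReal)
          + ∑ k ∈ Finset.range n,
            (P ({ω | cZero ω < u k} ∩ {ω | cNeg ω > t * u (k+1)})).toReal := hle2
      _ ≤ (t ^ (-γ) + t ^ (-γ)) + (n : ℝ) * t ^ (-γ) :=
          add_le_add (add_le_add hF_t hG_n) hsum_le
      _ = ((n : ℝ) + 2) * t ^ (-γ) := by ring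
  -- ### Lower bound
  have hLower : ∀ b : ℝ, min α0 αinf < (b : EReal) → ∃ c : ℝ, 0 < c ∧
      ∀ᶠ t : ℝ in atTop,
        c * t ^ (-b) ≤ (P {ω | Real.exp (-2 * δ) * cNeg ω / cZero ω > t}).toReal := by
    intro b hb
    rcases min_cases α0 αinf with ⟨hmin, _⟩ | ⟨hmin, _⟩
    · -- min = α0
      have hb0 : α0 < ((b:ℝ):EReal) := by rw [← hmin]; exact hb
      obtain ⟨r, hr0, hr⟩ := Metric.mem_nhdsWithin_iff.mp (Glower b hb0)
      have hGlow : ∀ ε : ℝ, 0 < ε → ε < r → ε ^ b ≤ (P {ω | cZero ω < ε}).toReal := by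
        intro ε h1 h2
        exact hr ⟨by rw [Metric.mem_ball, Real.dist_eq, sub_zero, abs_of_pos h1]; exact h2, h1⟩
      have hq : 0 < (P {ω | cNeg ω > 1}).toReal := by
        rw [hFneg]; exact FtoReal_pos 1
      refine ⟨Real.exp (-2 * δ * b) * (P {ω | cNeg ω > 1}).toReal, by positivity, ?_⟩
      have hev : ∀ᶠ t : ℝ in atTop, Real.exp (-2 * δ) / t < r :=
        (tendsto_const_nhds.div_atTop tendsto_id).eventually_lt_const hr0
      filter_upwards [hev, eventually_gt_atTop 1] with t htr ht1
      have ht0 : (0:ℝ) < t := lt_trans one_pos ht1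
      have hεpos : 0 < Real.exp (-2 * δ) / t := by positivity
      have hsub : {ω | cZero ω < Real.exp (-2 * δ) / t} ∩ {ω | cNeg ω > 1} ⊆
          {ω | Real.exp (-2 * δ) * cNeg ω / cZero ω > t} := by
        rintro ω ⟨h1, h2⟩
        simp only [Set.mem_setOf_eq] at h1 h2
        have hc0 := hpos₂ ω
        show t < Real.exp (-2 * δ) * cNeg ω / cZero ω
        have key : t * cZero ω < Real.exp (-2 * δ) * cNeg ω := by
          have e1 : cZero ω * t < Real.exp (-2 * δ) := (lt_div_iff₀ ht0).mp h1
          nlinarith [Real.exp_pos (-2 * δ)]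
        exact (lt_div_iff₀ hc0).mpr key
      have e3 : (Real.exp (-2 * δ) / t) ^ b = Real.exp (-2 * δ * b) * t ^ (-b) := by
        rw [Real.div_rpow (Real.exp_pos _).le ht0.le, ← Real.exp_mul,
          Real.rpow_neg ht0.le, div_eq_mul_inv]
      calc Real.exp (-2 * δ * b) * (P {ω | cNeg ω > 1}).toReal * t ^ (-b)
          = (Real.exp (-2 * δ) / t) ^ b * (P {ω | cNeg ω > 1}).toReal := by rw [e3]; ring
        _ ≤ (P {ω | cZero ω < Real.exp (-2 * δ) / t}).toReal
              * (P {ω | cNeg ω > 1}).toReal :=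
            mul_le_mul_of_nonneg_right (hGlow _ hεpos htr) ENNReal.toReal_nonneg
        _ = (P ({ω | cZero ω < Real.exp (-2 * δ) / t} ∩ {ω | cNeg ω > 1})).toReal := by
            rw [hInd, ENNReal.toReal_mul]
        _ ≤ (P {ω | Real.exp (-2 * δ) * cNeg ω / cZero ω > t}).toReal :=
            ENNReal.toReal_mono (measure_ne_top P _) (measure_mono hsub)
    · -- min = αinf
      have hbinf : αinf < ((b:ℝ):EReal) := by rw [← hmin]; exact hb
      obtain ⟨M₂, hM₂⟩ := eventually_atTop.mp (Flower b hbinf)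
      have hq : 0 < (P {ω | cZero ω < 1}).toReal := GtoReal_pos 1 one_pos
      refine ⟨Real.exp (-2 * δ * b) * (P {ω | cZero ω < 1}).toReal, by positivity, ?_⟩
      have hev : ∀ᶠ t : ℝ in atTop, M₂ ≤ t * Real.exp (2 * δ) :=
        (tendsto_id.atTop_mul_const (Real.exp_pos _)).eventually_ge_atTop M₂
      filter_upwards [hev, eventually_gt_atTop 1] with t htM ht1
      have ht0 : (0:ℝ) < t := lt_trans one_pos ht1
      have hvpos : 0 < t * Real.exp (2 * δ) := by positivity
      have hee : Real.exp (-2 * δ) * Real.exp (2 * δ) = 1 := by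
        rw [← Real.exp_add]; norm_num
      have hsub : {ω | cNeg ω > t * Real.exp (2 * δ)} ∩ {ω | cZero ω < 1} ⊆
          {ω | Real.exp (-2 * δ) * cNeg ω / cZero ω > t} := by
        rintro ω ⟨h1, h2⟩
        simp only [Set.mem_setOf_eq] at h1 h2
        have hc0 := hpos₂ ω
        show t < Real.exp (-2 * δ) * cNeg ω / cZero ω
        have key : t * cZero ω < Real.exp (-2 * δ) * cNeg ω := by
          nlinarith [Real.exp_pos (-2 * δ), Real.exp_pos (2 * δ)]
        exact (lt_div_iff₀ hc0).mpr key
      have e3 : (t * Real.exp (2 * δ)) ^ (-b) = t ^ (-b) * Real.exp (-2 * δ * b) := by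
        rw [Real.mul_rpow ht0.le (Real.exp_pos _).le, ← Real.exp_mul]
        congr 1
        ring
      calc Real.exp (-2 * δ * b) * (P {ω | cZero ω < 1}).toReal * t ^ (-b)
          = (t * Real.exp (2 * δ)) ^ (-b) * (P {ω | cZero ω < 1}).toReal := by rw [e3]; ring
        _ ≤ (P {ω | cNeg ω > t * Real.exp (2 * δ)}).toReal
              * (P {ω | cZero ω < 1}).toReal := by
            refine mul_le_mul_of_nonneg_right ?_ ENNReal.toReal_nonneg
            rw [hFneg]
            exact hM₂ _ htM
        _ = (P ({ω | cNeg ω > t * Real.exp (2 * δ)} ∩ {ω | cZero ω < 1})).toReal := by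
            rw [Set.inter_comm, hInd, ENNReal.toReal_mul, mul_comm]
        _ ≤ (P {ω | Real.exp (-2 * δ) * cNeg ω / cZero ω > t}).toReal :=
            ENNReal.toReal_mono (measure_ne_top P _) (measure_mono hsub)
  -- ### Conclusion
  rw [Metric.tendsto_nhds]
  intro ε hε
  set η : ℝ := min (ε/2) (A/2) with hη_def
  have hη0 : 0 < η := lt_min (by linarith) (by linarith)
  have hηε : η ≤ ε/2 := min_le_left _ _
  have hηA : η ≤ A/2 := min_le_right _ _
  have hγα : ((A - η : ℝ) : EReal) < min α0 αinf := by
    rw [← hAcoe]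
    exact_mod_cast (show A - η < A by linarith)
  obtain ⟨C, hC0, hCev⟩ := hUpper (A - η) (by linarith) hγα
  have hbα : min α0 αinf < ((A + ε/2 : ℝ) : EReal) := by
    rw [← hAcoe]
    exact_mod_cast (show A < A + ε/2 by linarith)
  obtain ⟨c, hc0, hcev⟩ := hLower (A + ε/2) hbα
  have hlogC : Tendsto (fun t : ℝ => Real.log C / Real.log t) atTop (nhds 0) :=
    tendsto_const_nhds.div_atTop Real.tendsto_log_atTop
  have hlogc : Tendsto (fun t : ℝ => Real.log c / Real.log t) atTop (nhds 0) :=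
    tendsto_const_nhds.div_atTop Real.tendsto_log_atTop
  filter_upwards [hCev, hcev, eventually_gt_atTop 1,
    hlogC.eventually_lt_const (show (0:ℝ) < ε/2 by linarith),
    hlogc.eventually_const_lt (show -(ε/2) < (0:ℝ) by linarith)] with t hup hlow ht1 hC2 hc2
  have ht0 : (0:ℝ) < t := lt_trans one_pos ht1
  have hlogt : 0 < Real.log t := Real.log_pos ht1
  set p : ℝ := (P {ω | Real.exp (-2 * δ) * cNeg ω / cZero ω > t}).toReal with hp_def
  have hppos : 0 < p := lt_of_lt_of_le (by positivity) hlow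
  have hlogup : Real.log p ≤ Real.log C - (A - η) * Real.log t := by
    have h1 : Real.log p ≤ Real.log (C * t ^ (-(A - η))) :=
      (Real.log_le_log_iff hppos (by positivity)).mpr hup
    rw [Real.log_mul hC0.ne' (Real.rpow_pos_of_pos ht0 _).ne', Real.log_rpow ht0] at h1
    linarith
  have hloglow : Real.log c - (A + ε/2) * Real.log t ≤ Real.log p := by
    have h1 : Real.log (c * t ^ (-(A + ε/2))) ≤ Real.log p :=
      (Real.log_le_log_iff (by positivity) hppos).mpr hlow
    rw [Real.log_mul hc0.ne' (Real.rpow_pos_of_pos ht0 _).ne', Real.log_rpow ht0] at h1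
    linarith
  have hub : Real.log p / Real.log t ≤ Real.log C / Real.log t - (A - η) := by
    calc Real.log p / Real.log t
        ≤ (Real.log C - (A - η) * Real.log t) / Real.log t :=
          (div_le_div_iff_of_pos_right hlogt).mpr hlogup
      _ = Real.log C / Real.log t - (A - η) := by
          rw [sub_div, mul_div_assoc, div_self hlogt.ne', mul_one]
  have hlb : Real.log c / Real.log t - (A + ε/2) ≤ Real.log p / Real.log t := by
    calc Real.log c / Real.log t - (A + ε/2)
        = (Real.log c - (A + ε/2) * Real.log t) / Real.log t := by
          rw [sub_div, mul_div_assoc, div_self hlogt.ne', mul_one]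
      _ ≤ Real.log p / Real.log t := (div_le_div_iff_of_pos_right hlogt).mpr hloglow
  rw [Real.dist_eq, sub_neg_eq_add, abs_lt]
  constructor <;> linarith
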